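/- Let (X_n)_{n∈ℕ} be a stationary sequence of random variables with values in a separable Hilbert space H such that EX_1 = 0, E‖X_1‖² < ∞, and E‖X_1 + ⋯ + X_n‖² ≤ C·n for all n and some constant C > 0. Then almost surely, (1/(√n · log²n)) · ‖X_1 + ⋯ + X_n‖ → 0 as n → ∞. -/

import Mathlib

open MeasureTheory Filter Topology
open scoped ENNReal NNReal BigOperators

section SLLNAux

variable {E : Type*} [NormedAddCommGroup E]

/-- Maximum of norms of the sums over aligned dyadic blocks of length `2^j`
inside `[0, 2^L)`. -/
noncomputable def sllnMj (f : ℕ → E) (L j : ℕ) : ℝ :=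
  (Finset.range (2 ^ (L - j))).sup'
    (Finset.nonempty_range_iff.mpr (pow_ne_zero _ two_ne_zero))
    fun r => ‖∑ i ∈ Finset.Ico (r * 2 ^ j) (r * 2 ^ j + 2 ^ j), f i‖

lemma sllnMj_nonneg (f : ℕ → E) (L j : ℕ) : 0 ≤ sllnMj f L j := by
  have h0 : (0 : ℕ) ∈ Finset.range (2 ^ (L - j)) :=
    Finset.mem_range.mpr (Nat.pos_of_ne_zero (pow_ne_zero _ two_ne_zero))
  unfold sllnMj
  exact le_trans (norm_nonneg _) (Finset.le_sup'
    (fun r => ‖∑ i ∈ Finset.Ico (r * 2 ^ j) (r * 2 ^ j + 2 ^ j), f i‖) h0)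

lemma le_sllnMj (f : ℕ → E) {L j a : ℕ} (hd : 2 ^ j ∣ a) (hle : a + 2 ^ j ≤ 2 ^ L) :
    ‖∑ i ∈ Finset.Ico a (a + 2 ^ j), f i‖ ≤ sllnMj f L j := by
  obtain ⟨r, hr⟩ := hd
  have hjL : j ≤ L := by
    have h2 : (2 : ℕ) ^ j ≤ 2 ^ L := le_trans (Nat.le_add_left _ _) hle
    exact (Nat.pow_le_pow_iff_right one_lt_two).mp h2
  have hrm : r ∈ Finset.range (2 ^ (L - j)) := by
    rw [Finset.mem_range]
    have h1 : (r + 1) * 2 ^ j ≤ 2 ^ (L - j) * 2 ^ j := by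
      have h2 : (r + 1) * 2 ^ j = a + 2 ^ j := by rw [hr]; ring
      have h3 : (2 : ℕ) ^ (L - j) * 2 ^ j = 2 ^ L := by
        rw [← pow_add, Nat.sub_add_cancel hjL]
      omega
    have := Nat.le_of_mul_le_mul_right h1 (pow_pos (by norm_num) j)
    omega
  have ha : a = r * 2 ^ j := by rw [hr, mul_comm]
  subst ha
  unfold sllnMj
  exact Finset.le_sup'
    (fun r => ‖∑ i ∈ Finset.Ico (r * 2 ^ j) (r * 2 ^ j + 2 ^ j), f i‖) hrm

lemma slln_chaining (f : ℕ → E) (L : ℕ) :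
    ∀ k a n : ℕ, n < 2 ^ k → 2 ^ k ∣ a → a + n ≤ 2 ^ L →
      ‖∑ i ∈ Finset.Ico a (a + n), f i‖ ≤ ∑ j ∈ Finset.range k, sllnMj f L j := by
  intro k
  induction k with
  | zero =>
      intro a n hn _ _
      have : n = 0 := by omega
      subst this
      simp
  | succ k ih =>
      intro a n hn hd hle
      have hdk : 2 ^ k ∣ a := dvd_trans (pow_dvd_pow 2 (Nat.le_succ k)) hd
      rcases lt_trichotomy n (2 ^ k) with h | h | h
      · refine (ih a n h hdk hle).trans ?_
        exact Finset.sum_le_sum_of_subset_of_nonneg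
          (Finset.range_subset_range.mpr (Nat.le_succ k))
          (fun j _ _ => sllnMj_nonneg f L j)
      · subst h
        refine (le_sllnMj f hdk hle).trans ?_
        exact Finset.single_le_sum (fun j _ => sllnMj_nonneg f L j)
          (Finset.self_mem_range_succ k)
      · have hsplit : ∑ i ∈ Finset.Ico a (a + n), f i =
            (∑ i ∈ Finset.Ico a (a + 2 ^ k), f i) +
            ∑ i ∈ Finset.Ico (a + 2 ^ k) (a + n), f i := by
          rw [Finset.sum_Ico_consecutive]
          · omega
          · omega
        rw [hsplit]
        refine (norm_add_le _ _).trans ?_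
        have h1 : ‖∑ i ∈ Finset.Ico a (a + 2 ^ k), f i‖ ≤ sllnMj f L k :=
          le_sllnMj f hdk (by omega)
        have h2 : ‖∑ i ∈ Finset.Ico (a + 2 ^ k) (a + n), f i‖ ≤
            ∑ j ∈ Finset.range k, sllnMj f L j := by
          have hd' : 2 ^ k ∣ a + 2 ^ k := Dvd.dvd.add hdk dvd_rfl
          have := ih (a + 2 ^ k) (n - 2 ^ k) (by omega) hd' (by omega)
          rwa [show a + 2 ^ k + (n - 2 ^ k) = a + n by omega] at this
        rw [Finset.sum_range_succ]
        linarith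

lemma slln_ratio {C a b e P : ℝ} (hC : 0 < C) (ha : 1 ≤ a) (hb : 0 < b) (he : 1 ≤ e)
    (hP : 0 < P) :
    (a + 1) ^ 2 * (C * (2 * P)) / ((1 / e) ^ 2 * (P * (a * b) ^ 4)) ≤
      8 * C * e ^ 2 / b ^ 4 / a ^ 2 := by
  have ha0 : (0:ℝ) < a := by linarith
  have he0 : (0:ℝ) < e := by linarith
  have h1 : (a + 1) ^ 2 * (C * (2 * P)) / ((1 / e) ^ 2 * (P * (a * b) ^ 4)) =
      2 * C * e ^ 2 * (a + 1) ^ 2 / (a ^ 4 * b ^ 4) := by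
    field_simp
  have h2 : 8 * C * e ^ 2 / b ^ 4 / a ^ 2 =
      2 * C * e ^ 2 * (2 * a) ^ 2 / (a ^ 4 * b ^ 4) := by
    field_simp
    ring
  rw [h1, h2]
  gcongr
  nlinarith

end SLLNAux

/-- Lemma 5 (strong law of large numbers with rate in Hilbert space): if `(X n)` is a
stationary, centered, square-integrable Hilbert space-valued sequence with
`E‖X_1 + ⋯ + X_n‖² ≤ C n` for all `n`, then almost surely
`‖X_1 + ⋯ + X_n‖ / (√n (log n)²) → 0`. -/
theorem stmt_4
    {H : Type*} [NormedAddCommGroup H] [InnerProductSpace ℝ H] [CompleteSpace H]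
    [SecondCountableTopology H] [MeasurableSpace H] [BorelSpace H]
    {Ω : Type*} [MeasurableSpace Ω] (μ : Measure Ω) [IsProbabilityMeasure μ]
    (X : ℕ → Ω → H) (hmeas : ∀ i, Measurable (X i))
    (hstat : ∀ (k n : ℕ), μ.map (fun ω => fun i : Fin n => X (k + i) ω)
        = μ.map (fun ω => fun i : Fin n => X i ω))
    (hcent : (∫ ω, X 0 ω ∂μ) = 0)
    (hsq : (∫⁻ ω, (‖X 0 ω‖₊ : ℝ≥0∞) ^ 2 ∂μ) < ⊤)
    (C : ℝ) (hC : 0 < C)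
    (hbound : ∀ n : ℕ, ∫⁻ ω, (‖∑ i ∈ Finset.range n, X i ω‖₊ : ℝ≥0∞) ^ 2 ∂μ
        ≤ ENNReal.ofReal (C * n)) :
    ∀ᵐ ω ∂μ, Tendsto
      (fun n : ℕ => ‖∑ i ∈ Finset.range n, X i ω‖ / (Real.sqrt n * (Real.log n) ^ 2))
      atTop (𝓝 0) := by
  classical
  -- measurability of block sums
  have hBm : ∀ s n : ℕ, Measurable fun ω => ∑ i ∈ Finset.Ico s (s + n), X i ω :=
    fun s n => Finset.measurable_sum _ fun i _ => hmeas i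
  -- stationarity: second moment of any block is bounded by `C * n`
  have hA : ∀ s n : ℕ,
      (∫⁻ ω, (‖∑ i ∈ Finset.Ico s (s + n), X i ω‖₊ : ℝ≥0∞) ^ 2 ∂μ)
        ≤ ENNReal.ofReal (C * n) := by
    intro s n
    have hrw : ∀ ω : Ω, ∑ i ∈ Finset.Ico s (s + n), X i ω
        = ∑ i : Fin n, X (s + i) ω := by
      intro ω
      rw [Finset.sum_Ico_eq_sum_range, show s + n - s = n by omega,
        ← Fin.sum_univ_eq_sum_range]
    set g : (Fin n → H) → ℝ≥0∞ := fun v => (‖∑ i, v i‖₊ : ℝ≥0∞) ^ 2 with hg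
    have hsum : Measurable fun v : Fin n → H => ∑ i, v i :=
      Finset.measurable_sum _ fun i _ => measurable_pi_apply i
    have hgm : Measurable g :=
      (measurable_coe_nnreal_ennreal.comp hsum.nnnorm).pow_const 2
    have hY : Measurable fun ω => fun i : Fin n => X (s + i) ω :=
      measurable_pi_lambda _ fun i => hmeas _
    have hZ : Measurable fun ω => fun i : Fin n => X i ω :=
      measurable_pi_lambda _ fun i => hmeas _
    calc ∫⁻ ω, (‖∑ i ∈ Finset.Ico s (s + n), X i ω‖₊ : ℝ≥0∞) ^ 2 ∂μ
        = ∫⁻ ω, g (fun i : Fin n => X (s + i) ω) ∂μ := by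
          simp only [hg]
          exact lintegral_congr fun ω => by rw [hrw ω]
      _ = ∫⁻ v, g v ∂(μ.map (fun ω => fun i : Fin n => X (s + i) ω)) :=
          (lintegral_map hgm hY).symm
      _ = ∫⁻ v, g v ∂(μ.map (fun ω => fun i : Fin n => X i ω)) := by rw [hstat s n]
      _ = ∫⁻ ω, g (fun i : Fin n => X i ω) ∂μ := lintegral_map hgm hZ
      _ = ∫⁻ ω, (‖∑ i ∈ Finset.range n, X i ω‖₊ : ℝ≥0∞) ^ 2 ∂μ := by
          refine lintegral_congr fun ω => ?_
          simp only [hg]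
          rw [Fin.sum_univ_eq_sum_range (fun i => X i ω) n]
      _ ≤ ENNReal.ofReal (C * n) := hbound n
  -- measurability of the dyadic maxima
  have hMjmeas : ∀ L j : ℕ, Measurable fun ω => sllnMj (fun i => X i ω) L j := by
    intro L j
    have hne : (Finset.range (2 ^ (L - j))).Nonempty :=
      Finset.nonempty_range_iff.mpr (pow_ne_zero _ two_ne_zero)
    have := Finset.measurable_sup' hne
      (f := fun r (ω : Ω) => ‖∑ i ∈ Finset.Ico (r * 2 ^ j) (r * 2 ^ j + 2 ^ j), X i ω‖)
      (fun r _ => (hBm _ _).norm)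
    have heq : (fun ω => sllnMj (fun i => X i ω) L j) =
        (Finset.range (2 ^ (L - j))).sup' hne
          (fun r (ω : Ω) => ‖∑ i ∈ Finset.Ico (r * 2 ^ j) (r * 2 ^ j + 2 ^ j), X i ω‖) := by
      funext ω
      rw [sllnMj, Finset.sup'_apply]
    rw [heq]
    exact this
  -- second moment of each dyadic maximum
  have hMjsq : ∀ K j : ℕ, j < K →
      (∫⁻ ω, ENNReal.ofReal ((sllnMj (fun i => X i ω) K j) ^ 2) ∂μ)
        ≤ ENNReal.ofReal (C * 2 ^ K) := by
    intro K j hj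
    have hpt : ∀ ω : Ω, ENNReal.ofReal ((sllnMj (fun i => X i ω) K j) ^ 2)
        ≤ ∑ r ∈ Finset.range (2 ^ (K - j)),
            (‖∑ i ∈ Finset.Ico (r * 2 ^ j) (r * 2 ^ j + 2 ^ j), X i ω‖₊ : ℝ≥0∞) ^ 2 := by
      intro ω
      obtain ⟨r, hrm, hre⟩ := Finset.exists_mem_eq_sup'
        (Finset.nonempty_range_iff.mpr (pow_ne_zero (K - j) two_ne_zero))
        (fun r => ‖∑ i ∈ Finset.Ico (r * 2 ^ j) (r * 2 ^ j + 2 ^ j), X i ω‖)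
      have h1 : ENNReal.ofReal ((sllnMj (fun i => X i ω) K j) ^ 2)
          = (‖∑ i ∈ Finset.Ico (r * 2 ^ j) (r * 2 ^ j + 2 ^ j), X i ω‖₊ : ℝ≥0∞) ^ 2 := by
        rw [sllnMj, hre, ENNReal.ofReal_pow (norm_nonneg _), ofReal_norm, enorm_eq_nnnorm]
      rw [h1]
      exact Finset.single_le_sum
        (f := fun r => ((‖∑ i ∈ Finset.Ico (r * 2 ^ j) (r * 2 ^ j + 2 ^ j), X i ω‖₊ : ℝ≥0∞) ^ 2))
        (fun _ _ => zero_le) hrm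
    calc (∫⁻ ω, ENNReal.ofReal ((sllnMj (fun i => X i ω) K j) ^ 2) ∂μ)
        ≤ ∫⁻ ω, ∑ r ∈ Finset.range (2 ^ (K - j)),
            (‖∑ i ∈ Finset.Ico (r * 2 ^ j) (r * 2 ^ j + 2 ^ j), X i ω‖₊ : ℝ≥0∞) ^ 2 ∂μ :=
          lintegral_mono hpt
      _ = ∑ r ∈ Finset.range (2 ^ (K - j)),
            ∫⁻ ω, (‖∑ i ∈ Finset.Ico (r * 2 ^ j) (r * 2 ^ j + 2 ^ j), X i ω‖₊ : ℝ≥0∞) ^ 2 ∂μ :=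
          lintegral_finset_sum _ (fun r _ =>
            ((measurable_coe_nnreal_ennreal.comp (hBm _ _).nnnorm).pow_const 2))
      _ ≤ ∑ r ∈ Finset.range (2 ^ (K - j)), ENNReal.ofReal (C * 2 ^ j) := by
          refine Finset.sum_le_sum fun r _ => ?_
          have := hA (r * 2 ^ j) (2 ^ j)
          simpa using this
      _ = ENNReal.ofReal (C * 2 ^ K) := by
          rw [Finset.sum_const, Finset.card_range, nsmul_eq_mul,
            ← ENNReal.ofReal_natCast, ← ENNReal.ofReal_mul (by positivity)]
          congr 1
          have hKj : K - j + j = K := Nat.sub_add_cancel hj.le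
          push_cast
          rw [show ((2:ℝ) ^ (K - j) * (C * 2 ^ j)) = C * (2 ^ (K - j) * 2 ^ j) by ring,
            ← pow_add, hKj]
  -- total majorant
  set T : ℕ → Ω → ℝ := fun K ω => ∑ j ∈ Finset.range K, sllnMj (fun i => X i ω) K j with hT
  have hTmeas : ∀ K, Measurable (T K) := fun K =>
    Finset.measurable_sum _ fun j _ => hMjmeas K j
  have hTnonneg : ∀ K ω, 0 ≤ T K ω := fun K ω =>
    Finset.sum_nonneg fun j _ => sllnMj_nonneg _ K j
  have hTsq : ∀ K : ℕ,
      (∫⁻ ω, ENNReal.ofReal ((T K ω) ^ 2) ∂μ) ≤ ENNReal.ofReal ((K:ℝ)^2 * (C * 2 ^ K)) := by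
    intro K
    have hpt : ∀ ω, ENNReal.ofReal ((T K ω) ^ 2)
        ≤ (K : ℝ≥0∞) * ∑ j ∈ Finset.range K,
            ENNReal.ofReal ((sllnMj (fun i => X i ω) K j) ^ 2) := by
      intro ω
      have h1 : (T K ω) ^ 2 ≤ (K:ℝ) * ∑ j ∈ Finset.range K,
          (sllnMj (fun i => X i ω) K j) ^ 2 := by
        have := sq_sum_le_card_mul_sum_sq
          (s := Finset.range K) (f := fun j => sllnMj (fun i => X i ω) K j)
        simpa [hT] using this
      calc ENNReal.ofReal ((T K ω) ^ 2)
          ≤ ENNReal.ofReal ((K:ℝ) * ∑ j ∈ Finset.range K,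
              (sllnMj (fun i => X i ω) K j) ^ 2) := ENNReal.ofReal_le_ofReal h1
        _ = (K : ℝ≥0∞) * ∑ j ∈ Finset.range K,
              ENNReal.ofReal ((sllnMj (fun i => X i ω) K j) ^ 2) := by
            rw [ENNReal.ofReal_mul (by positivity), ENNReal.ofReal_natCast,
              ENNReal.ofReal_sum_of_nonneg (fun j _ => sq_nonneg _)]
    calc (∫⁻ ω, ENNReal.ofReal ((T K ω) ^ 2) ∂μ)
        ≤ ∫⁻ ω, (K : ℝ≥0∞) * ∑ j ∈ Finset.range K,
            ENNReal.ofReal ((sllnMj (fun i => X i ω) K j) ^ 2) ∂μ := lintegral_mono hpt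
      _ = (K : ℝ≥0∞) * ∑ j ∈ Finset.range K,
            ∫⁻ ω, ENNReal.ofReal ((sllnMj (fun i => X i ω) K j) ^ 2) ∂μ := by
          rw [lintegral_const_mul _ (Finset.measurable_sum _ fun j _ =>
            ((hMjmeas K j).pow_const 2).ennreal_ofReal),
            lintegral_finset_sum _ (fun j _ => ((hMjmeas K j).pow_const 2).ennreal_ofReal)]
      _ ≤ (K : ℝ≥0∞) * ∑ j ∈ Finset.range K, ENNReal.ofReal (C * 2 ^ K) := by
          gcongr with j hj
          exact hMjsq K j (Finset.mem_range.mp hj)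
      _ = ENNReal.ofReal ((K:ℝ)^2 * (C * 2 ^ K)) := by
          rw [Finset.sum_const, Finset.card_range, nsmul_eq_mul, ← mul_assoc,
            ← ENNReal.ofReal_natCast K, ← ENNReal.ofReal_mul (by positivity),
            ← ENNReal.ofReal_mul (by positivity)]
          congr 1
          push_cast
          ring
  -- Chebyshev
  have hCheb : ∀ (K : ℕ) (t : ℝ), 0 < t →
      μ {ω | t ≤ T K ω} ≤ ENNReal.ofReal ((K:ℝ)^2 * (C * 2 ^ K) / t ^ 2) := by
    intro K t ht
    have hsub : {ω | t ≤ T K ω} ⊆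
        {ω | ENNReal.ofReal (t ^ 2) ≤ ENNReal.ofReal ((T K ω) ^ 2)} := by
      intro ω hω
      exact ENNReal.ofReal_le_ofReal (pow_le_pow_left₀ ht.le hω 2)
    refine (measure_mono hsub).trans ?_
    have h2 := meas_ge_le_lintegral_div
      (μ := μ) (f := fun ω => ENNReal.ofReal ((T K ω) ^ 2))
      (((hTmeas K).pow_const 2).ennreal_ofReal.aemeasurable)
      (ε := ENNReal.ofReal (t ^ 2))
      (ne_of_gt (ENNReal.ofReal_pos.mpr (by positivity))) ENNReal.ofReal_ne_top
    refine h2.trans ?_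
    calc (∫⁻ ω, ENNReal.ofReal ((T K ω) ^ 2) ∂μ) / ENNReal.ofReal (t ^ 2)
        ≤ ENNReal.ofReal ((K:ℝ)^2 * (C * 2 ^ K)) / ENNReal.ofReal (t ^ 2) :=
          ENNReal.div_le_div_right (hTsq K) _
      _ = ENNReal.ofReal ((K:ℝ)^2 * (C * 2 ^ K) / t ^ 2) :=
          (ENNReal.ofReal_div_of_pos (by positivity)).symm
  -- the bad events
  set A : ℕ → ℕ → Set Ω := fun m L =>
    {ω | 1 / ((m:ℝ) + 1) * (Real.sqrt (2 ^ (L + 1)) * (((L:ℝ) + 1) * Real.log 2) ^ 2)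
        ≤ T (L + 2) ω} with hAdef
  have hlog2 : (0:ℝ) < Real.log 2 := Real.log_pos one_lt_two
  have hAbound : ∀ m L : ℕ, μ (A m L) ≤
      ENNReal.ofReal ((8 * C * ((m:ℝ) + 1) ^ 2 / (Real.log 2) ^ 4) / ((L:ℝ) + 1) ^ 2) := by
    intro m L
    set t : ℝ := 1 / ((m:ℝ) + 1) *
      (Real.sqrt (2 ^ (L + 1)) * (((L:ℝ) + 1) * Real.log 2) ^ 2) with hto
    have ht : 0 < t := by
      apply mul_pos (by positivity)
      apply mul_pos (Real.sqrt_pos.mpr (by positivity))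
      positivity
    refine (hCheb (L + 2) t ht).trans (ENNReal.ofReal_le_ofReal ?_)
    have hsq2 : Real.sqrt ((2:ℝ) ^ (L + 1)) ^ 2 = 2 ^ (L + 1) :=
      Real.sq_sqrt (by positivity)
    have ht2 : t ^ 2 = (1 / ((m:ℝ) + 1)) ^ 2 *
        ((2:ℝ) ^ (L + 1) * (((L:ℝ) + 1) * Real.log 2) ^ 4) := by
      rw [hto, mul_pow, mul_pow, hsq2, ← pow_mul]
    rw [ht2]
    have hcast : (((L:ℕ) + 2 : ℕ) : ℝ) ^ 2 * (C * 2 ^ (L + 2)) =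
        (((L:ℝ) + 1) + 1) ^ 2 * (C * (2 * 2 ^ (L + 1))) := by
      push_cast
      ring
    rw [hcast]
    exact slln_ratio hC (by norm_num : (1:ℝ) ≤ (L:ℝ) + 1) hlog2
      (by norm_num : (1:ℝ) ≤ (m:ℝ) + 1) (by positivity)
  -- Borel–Cantelli
  have hBC : ∀ᵐ ω ∂μ, ∀ m : ℕ, ∀ᶠ L in atTop, ω ∉ A m L := by
    rw [ae_all_iff]
    intro m
    apply ae_eventually_notMem
    set D : ℝ := 8 * C * ((m:ℝ) + 1) ^ 2 / (Real.log 2) ^ 4 with hD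
    have hsummable : Summable fun L : ℕ => D / ((L:ℝ) + 1) ^ 2 := by
      have h0 : Summable fun n : ℕ => D * (1 / (n:ℝ) ^ 2) :=
        (Real.summable_one_div_nat_pow.mpr one_lt_two).mul_left D
      have h1 : Summable fun L : ℕ => D * (1 / ((L:ℝ) + 1) ^ 2) := by
        have := (summable_nat_add_iff 1).mpr h0
        simpa using this
      refine h1.congr fun L => ?_
      rw [mul_one_div]
    have hle : (∑' L, μ (A m L)) ≤ ∑' L : ℕ, ENNReal.ofReal (D / ((L:ℝ) + 1) ^ 2) :=
      ENNReal.tsum_le_tsum fun L => hAbound m L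
    refine ne_top_of_le_ne_top ?_ hle
    rw [← ENNReal.ofReal_tsum_of_nonneg (fun L => by positivity) hsummable]
    exact ENNReal.ofReal_ne_top
  -- conclusion
  filter_upwards [hBC] with ω hω
  rw [Metric.tendsto_atTop]
  intro ε hε
  obtain ⟨m, hm⟩ := exists_nat_one_div_lt hε
  obtain ⟨L0, hL0⟩ := eventually_atTop.mp (hω m)
  refine ⟨max (2 ^ (L0 + 1)) 2, fun n hn => ?_⟩
  have hn2 : 2 ≤ n := le_trans (le_max_right _ _) hn
  have hnL : 2 ^ (L0 + 1) ≤ n := le_trans (le_max_left _ _) hn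
  set L' := Nat.log 2 n with hL'
  have hL'1 : L0 + 1 ≤ L' := by
    calc L0 + 1 = Nat.log 2 (2 ^ (L0 + 1)) := (Nat.log_pow one_lt_two _).symm
      _ ≤ L' := Nat.log_mono_right hnL
  set L := L' - 1 with hLdef
  have hL'eq : L' = L + 1 := by omega
  have hnotA : ω ∉ A m L := hL0 L (by omega)
  have hlow : 2 ^ (L + 1) ≤ n := by
    rw [← hL'eq]
    exact Nat.pow_log_le_self 2 (by omega)
  have hup : n < 2 ^ (L + 2) := by
    have := Nat.lt_pow_succ_log_self one_lt_two n
    rw [← hL', hL'eq] at this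
    exact this
  have hchain : ‖∑ i ∈ Finset.range n, X i ω‖ ≤ T (L + 2) ω := by
    have := slln_chaining (fun i => X i ω) (L + 2) (L + 2) 0 n hup (dvd_zero _)
      (by omega)
    have h0 : Finset.range n = Finset.Ico 0 (0 + n) := by
      rw [Finset.range_eq_Ico, zero_add]
    rw [h0, hT]
    exact this
  have hTlt : T (L + 2) ω <
      1 / ((m:ℝ) + 1) * (Real.sqrt (2 ^ (L + 1)) * (((L:ℝ) + 1) * Real.log 2) ^ 2) :=
    lt_of_not_ge hnotA
  have hcastlow : ((2:ℝ) ^ (L + 1)) ≤ (n:ℝ) := by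
    exact_mod_cast hlow
  have hsqrt : Real.sqrt ((2:ℝ) ^ (L + 1)) ≤ Real.sqrt n := Real.sqrt_le_sqrt hcastlow
  have hlogb : ((L:ℝ) + 1) * Real.log 2 ≤ Real.log n := by
    calc ((L:ℝ) + 1) * Real.log 2 = Real.log ((2:ℝ) ^ (L + 1)) := by
          rw [Real.log_pow]; push_cast; ring
      _ ≤ Real.log n := Real.log_le_log (by positivity) hcastlow
  have hlognn : 0 ≤ ((L:ℝ) + 1) * Real.log 2 := by positivity
  have hq : (((L:ℝ) + 1) * Real.log 2) ^ 2 ≤ (Real.log n) ^ 2 :=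
    pow_le_pow_left₀ hlognn hlogb 2
  have hdenom : Real.sqrt (2 ^ (L + 1)) * (((L:ℝ) + 1) * Real.log 2) ^ 2 ≤
      Real.sqrt n * (Real.log n) ^ 2 :=
    mul_le_mul hsqrt hq (by positivity) (Real.sqrt_nonneg _)
  have hdpos : 0 < Real.sqrt n * (Real.log n) ^ 2 := by
    apply mul_pos (Real.sqrt_pos.mpr (by positivity))
    have : (0:ℝ) < Real.log n := by
      apply Real.log_pos
      exact_mod_cast one_lt_two.trans_le hn2
    positivity
  have hfinal : ‖∑ i ∈ Finset.range n, X i ω‖ <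
      ε * (Real.sqrt n * (Real.log n) ^ 2) := by
    calc ‖∑ i ∈ Finset.range n, X i ω‖ ≤ T (L + 2) ω := hchain
      _ < 1 / ((m:ℝ) + 1) *
          (Real.sqrt (2 ^ (L + 1)) * (((L:ℝ) + 1) * Real.log 2) ^ 2) := hTlt
      _ ≤ 1 / ((m:ℝ) + 1) * (Real.sqrt n * (Real.log n) ^ 2) := by
          apply mul_le_mul_of_nonneg_left hdenom (by positivity)
      _ < ε * (Real.sqrt n * (Real.log n) ^ 2) := by
          apply mul_lt_mul_of_pos_right hm hdpos
  rw [Real.dist_eq, sub_zero, abs_of_nonneg (by positivity)]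
  rw [div_lt_iff₀ hdpos]
  exact hfinal
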